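/- Let $\mathcal{D}$ be a Cartan datum of type $A_n$ over a finite abelian group $\Gamma$, $\mu \in k^{\Phi^+}$, and define $u_{ij}(\mu) \in k[\Gamma]$ inductively by $u_{ij}(\mu) = \mu_{ij}(1 - g_{ij}^N) + \sum_{i < p < j} (q-1)^N \mu_{ip}\, u_{pj}(\mu)$. If $\mu$ satisfies (R2) (i.e. $\mu_{ij} = 0$ whenever $\chi_{ij}^N \neq 1$), then $u_{ij}(\mu) = 0$ for all $1 \leq i < j \leq n+1$ with $\chi_{ij}^N \neq 1$. -/

import Mathlib

/-- The elements `u_{ij}(μ)` of the group algebra `k[Γ]`, defined inductively by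
`u_{ij}(μ) = μ_{ij}(1 - g_{ij}^N) + ∑_{i<p<j} (q-1)^N μ_{ip} u_{pj}(μ)`,
where `g_{ij} = g_i g_{i+1} ⋯ g_{j-1}`. -/
noncomputable def uElt {k : Type*} [Field k] {Γ : Type*} [CommGroup Γ]
    (g : ℕ → Γ) (q : k) (N : ℕ) (μ : ℕ → ℕ → k) : ℕ → ℕ → MonoidAlgebra k Γ
  | i, j =>
    μ i j • ((1 : MonoidAlgebra k Γ)
        - MonoidAlgebra.of k Γ ((∏ t ∈ Finset.Ico i j, g t) ^ N))
      + ∑ p ∈ (Finset.Ioo i j).attach,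
          ((q - 1) ^ N * μ i ↑p) • uElt g q N μ ↑p j
  termination_by i j => j - i
  decreasing_by
    have := Finset.mem_Ioo.mp p.2
    omega

theorem uElt_aux {k : Type*} [Field k] {Γ : Type*} [CommGroup Γ]
    (n N : ℕ) (q : k) (g : ℕ → Γ) (χ : ℕ → Γ →* kˣ) (μ : ℕ → ℕ → k)
    (hR2 : ∀ a b, 1 ≤ a → a < b → b ≤ n + 1 →
      (∏ t ∈ Finset.Ico a b, χ t) ^ N ≠ 1 → μ a b = 0) :
    ∀ d i j, j - i = d → 1 ≤ i → i < j → j ≤ n + 1 →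
      (∏ t ∈ Finset.Ico i j, χ t) ^ N ≠ 1 → uElt g q N μ i j = 0 := by
  intro d
  induction d using Nat.strong_induction_on with
  | _ d ih =>
    intro i j hd hi hij hj hχ
    rw [uElt, hR2 i j hi hij hj hχ, zero_smul, zero_add]
    apply Finset.sum_eq_zero
    intro p hp
    obtain ⟨hip, hpj⟩ := Finset.mem_Ioo.mp p.2
    by_cases h1 : (∏ t ∈ Finset.Ico (p : ℕ) j, χ t) ^ N = 1
    · have h2 : (∏ t ∈ Finset.Ico i (p : ℕ), χ t) ^ N ≠ 1 := by
        intro h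
        apply hχ
        rw [← Finset.prod_Ico_consecutive χ (le_of_lt hip) (le_of_lt hpj), mul_pow, h, h1]
        exact MonoidHom.ext fun x => by simp
      rw [hR2 i p hi hip (by omega) h2, mul_zero, zero_smul]
    · rw [ih (j - p) (by omega) p j rfl (by omega) hpj hj h1, smul_zero]

/-- Let `𝒟` be a Cartan datum of type `A_n` over a finite abelian
group `Γ` and `μ ∈ k^{Φ⁺}` satisfying (R2): `μ_{ij} = 0` whenever `χ_{ij}^N ≠ 1`.
Then `u_{ij}(μ) = 0` for all `1 ≤ i < j ≤ n+1` with `χ_{ij}^N ≠ 1`. -/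
theorem stmt_13 {k : Type*} [Field k] {Γ : Type*} [CommGroup Γ] [Fintype Γ]
    (n N : ℕ) (hn : 2 ≤ n) (hNodd : Odd N) (hN1 : 1 < N)
    (q : k) (hq : IsPrimitiveRoot q N)
    (g : ℕ → Γ) (χ : ℕ → Γ →* kˣ)
    (hdiag : ∀ l, 1 ≤ l → l ≤ n → ((χ l) (g l) : k) = q)
    (hC1 : ∀ a b, 1 ≤ a → a ≤ n → 1 ≤ b → b ≤ n → (a + 1 = b ∨ b + 1 = a) →
      ((χ b) (g a) : k) * ((χ a) (g b) : k) = q⁻¹)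
    (hC2 : ∀ a b, 1 ≤ a → a ≤ n → 1 ≤ b → b ≤ n → (a + 2 ≤ b ∨ b + 2 ≤ a) →
      ((χ b) (g a) : k) * ((χ a) (g b) : k) = 1)
    (μ : ℕ → ℕ → k)
    (hR2 : ∀ a b, 1 ≤ a → a < b → b ≤ n + 1 →
      (∏ t ∈ Finset.Ico a b, χ t) ^ N ≠ 1 → μ a b = 0)
    (i j : ℕ) (hi : 1 ≤ i) (hij : i < j) (hj : j ≤ n + 1)
    (hχ : (∏ t ∈ Finset.Ico i j, χ t) ^ N ≠ 1) :
    uElt g q N μ i j = 0 := by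
  exact uElt_aux n N q g χ μ hR2 (j - i) i j rfl hi hij hj hχ
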